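/- Fix an integer p ≥ 2 with p ≢ 0 (mod 4), and let A, B be the p×p complex matrices defined by A e_l = c·e_{l+1} and B e_l = c·ω^l·e_l for l ∈ ℤ/p, where ω = exp(2πi/p), c = i^{1−p²}. For integers (k, l) let m_{(k,l)} = su(p) ∩ (ℂ·A^k B^l + ℂ·A^{−k} B^{−l}), a real subspace of su(p). Then: (1) for every (k, l) with (k, l) ≢ (0, 0) (mod p), the subspace m_{(k,l)} is abelian, i.e. [X, Y] = 0 for all X, Y ∈ m_{(k,l)}; (2) every element of su(p) is a finite sum of elements of the subspaces m_{(k,l)} with (k, l) ≢ (0, 0) (mod p). -/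

import Mathlib

open Matrix

namespace Stmt10Aux

variable {p : ℕ} [NeZero p]

noncomputable def Fm (p : ℕ) [NeZero p] (c : ℂ) (k : ℤ) : Matrix (ZMod p) (ZMod p) ℂ :=
  fun r s => if r = s + (k : ZMod p) then c ^ k else 0

noncomputable def Gm (p : ℕ) [NeZero p] (c ω : ℂ) (l : ℤ) : Matrix (ZMod p) (ZMod p) ℂ :=
  Matrix.diagonal fun s => c ^ l * ω ^ (l * (s.val : ℤ))

lemma Fm_mul (c : ℂ) (hc0 : c ≠ 0) (k m : ℤ) :
    Fm p c k * Fm p c m = Fm p c (k + m) := by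
  ext r s
  simp only [Fm, mul_apply]
  rw [Finset.sum_eq_single (s + (m : ZMod p))]
  · simp [add_assoc, zpow_add₀ hc0, add_comm (m : ZMod p), mul_comm]
  · intro t _ ht
    rw [if_neg ht, mul_zero]
  · simp
lemma Gm_mul (c ω : ℂ) (hc0 : c ≠ 0) (hω0 : ω ≠ 0) (l m : ℤ) :
    Gm p c ω l * Gm p c ω m = Gm p c ω (l + m) := by
  ext i j
  rcases eq_or_ne i j with rfl | h
  · simp [Gm, diagonal_mul_diagonal, zpow_add₀ hc0, zpow_add₀ hω0, add_mul]
    ring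
  · simp [Gm, diagonal_mul_diagonal, diagonal_apply_ne _ h]

lemma Fm_zero (c : ℂ) : Fm p c 0 = 1 := by
  ext r s
  simp [Fm, one_apply, eq_comm]

lemma Gm_zero (c ω : ℂ) : Gm p c ω 0 = 1 := by
  simp [Gm]

end Stmt10Aux

namespace Stmt10Aux

lemma units_zpow_eq {M : Type*} [Monoid M] (u : Mˣ) (F : ℤ → M)
    (hmul : ∀ k m : ℤ, F k * F m = F (k + m)) (h0 : F 0 = 1) (h1 : (u : M) = F 1) :
    ∀ k : ℤ, ((u ^ k : Mˣ) : M) = F k := by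
  have hinv : ((u⁻¹ : Mˣ) : M) = F (-1) := by
    have h11 : (u : M) * F (-1) = 1 := by rw [h1, hmul]; norm_num [h0]
    calc ((u⁻¹ : Mˣ) : M) = ((u⁻¹ : Mˣ) : M) * ((u : M) * F (-1)) := by rw [h11, mul_one]
      _ = F (-1) := by rw [← mul_assoc, Units.inv_mul, one_mul]
  intro k
  induction k using Int.induction_on with
  | zero => simpa using h0.symm
  | succ n ih => rw [_root_.zpow_add_one, Units.val_mul, ih, h1, hmul]
  | pred n ih =>
      rw [_root_.zpow_sub_one, Units.val_mul, ih, hinv, hmul, sub_eq_add_neg]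

variable {p : ℕ} [NeZero p]

lemma Fm_one (c : ℂ) : Fm p c 1 = fun r s => if r = s + 1 then c else 0 := by
  funext r s
  simp [Fm]

lemma Gm_one (c ω : ℂ) : Gm p c ω 1 = fun r s => if r = s then c * ω ^ s.val else 0 := by
  funext r s
  rcases eq_or_ne r s with rfl | h
  · rw [if_pos rfl]
    show Matrix.diagonal _ r r = _
    rw [diagonal_apply_eq, zpow_one, one_mul, zpow_natCast]
  · rw [if_neg h]
    exact diagonal_apply_ne _ h

end Stmt10Aux

namespace Stmt10Aux

lemma comm_zpow {G : Type*} [Group G] (w a b : G) (hw : ∀ g : G, w * g = g * w)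
    (h : b * a = w * (a * b)) (k l : ℤ) :
    b ^ l * a ^ k = w ^ (k * l) * (a ^ k * b ^ l) := by
  have hwa : Commute w a := hw a
  have hwb : Commute w b := hw b
  have s1 : SemiconjBy a b (w⁻¹ * b) := by
    show a * b = (w⁻¹ * b) * a
    rw [mul_assoc, h, ← mul_assoc, inv_mul_cancel, one_mul]
  have s2 := s1.zpow_right l
  have hwinvb : (w⁻¹ * b) ^ l = w ^ (-l) * b ^ l := by
    rw [(hwb.inv_left).mul_zpow]; group
  have s3 : SemiconjBy (b ^ l) a (w ^ l * a) := by
    show b ^ l * a = (w ^ l * a) * b ^ l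
    have hthis := s2
    rw [SemiconjBy, hwinvb] at hthis
    calc b ^ l * a = w ^ l * (w ^ (-l) * b ^ l * a) := by group
      _ = w ^ l * (a * b ^ l) := by rw [hthis]
      _ = w ^ l * a * b ^ l := by rw [mul_assoc]
  have s4 := s3.zpow_right k
  rw [SemiconjBy] at s4
  have hwk : (w ^ l * a) ^ k = w ^ (l * k) * a ^ k := by
    rw [(hwa.zpow_left l).mul_zpow]; group
  rw [s4, hwk, mul_comm l k, mul_assoc]

end Stmt10Aux

namespace Stmt10Aux

variable {p : ℕ} [NeZero p]

lemma char_sum (ζ : ℂ) (hζp : ζ ^ p = 1) :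
    ∑ s : ZMod p, ζ ^ s.val = if ζ = 1 then (p : ℂ) else 0 := by
  have hbij : ∑ s : ZMod p, ζ ^ s.val = ∑ i ∈ Finset.range p, ζ ^ i := by
    apply Finset.sum_bij (fun (s : ZMod p) _ => s.val)
    · intro s _; exact Finset.mem_range.mpr (ZMod.val_lt s)
    · intro s _ t _ h; exact ZMod.val_injective p h
    · intro i hi
      exact ⟨(i : ZMod p), Finset.mem_univ _,
        (ZMod.val_cast_of_lt (Finset.mem_range.mp hi))⟩
    · intro s _; rfl
  rw [hbij]
  split_ifs with h1
  · simp [h1]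
  · rw [geom_sum_eq h1, hζp]
    simp

lemma pow_val_mod (ω : ℂ) (hωp : ω ^ p = 1) (a : ℕ) : ω ^ (a % p) = ω ^ a := by
  conv_rhs => rw [← Nat.div_add_mod a p]
  rw [pow_add, pow_mul, hωp, one_pow, one_mul]

lemma FG_apply (c ω : ℂ) (k l : ℤ) (r s : ZMod p) :
    (Fm p c k * Gm p c ω l) r s =
      if r = s + (k : ZMod p) then (c ^ k * c ^ l) * ω ^ (l * (s.val : ℤ)) else 0 := by
  rw [Gm, mul_diagonal]
  simp only [Fm, ite_mul, zero_mul, mul_assoc]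

lemma trace_FG (c ω : ℂ) (hω : IsPrimitiveRoot ω p) (k l : ℤ)
    (h : ¬((k : ZMod p) = 0 ∧ (l : ZMod p) = 0)) :
    (Fm p c k * Gm p c ω l).trace = 0 := by
  rw [Matrix.trace]
  by_cases hk : (k : ZMod p) = 0
  · have hl : (l : ZMod p) ≠ 0 := fun hl => h ⟨hk, hl⟩
    have hz1 : (ω ^ l) ^ p = 1 := by
      rw [← zpow_natCast (ω ^ l), ← _root_.zpow_mul, mul_comm, _root_.zpow_mul, zpow_natCast, hω.pow_eq_one,
        _root_.one_zpow]
    have hzne : ω ^ l ≠ 1 := by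
      intro hone
      exact hl ((ZMod.intCast_zmod_eq_zero_iff_dvd l p).mpr ((hω.zpow_eq_one_iff_dvd l).mp hone))
    calc ∑ s : ZMod p, (Fm p c k * Gm p c ω l).diag s
        = ∑ s : ZMod p, (c ^ k * c ^ l) * (ω ^ l) ^ s.val := by
          apply Finset.sum_congr rfl
          intro s _
          rw [Matrix.diag, FG_apply, hk, add_zero, if_pos rfl, _root_.zpow_mul, zpow_natCast]
      _ = (c ^ k * c ^ l) * ∑ s : ZMod p, (ω ^ l) ^ s.val := by rw [Finset.mul_sum]
      _ = 0 := by rw [char_sum _ hz1, if_neg hzne, mul_zero]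
  · apply Finset.sum_eq_zero
    intro s _
    rw [Matrix.diag, FG_apply, if_neg]
    intro hs
    exact hk (by simpa using hs.symm)

lemma Fm_conjT (c : ℂ) (hcc : (starRingEnd ℂ) c = c⁻¹) (k : ℤ) :
    (Fm p c k)ᴴ = Fm p c (-k) := by
  ext r s
  rw [conjTranspose_apply, Fm, Fm]
  by_cases h : s = r + (k : ZMod p)
  · have h2 : r = s + ((-k : ℤ) : ZMod p) := by push_cast; rw [h]; ring
    rw [if_pos h, if_pos h2]
    simp only [RCLike.star_def, map_zpow₀, hcc]
    rw [_root_.inv_zpow, ← _root_.zpow_neg]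
  · have h2 : r ≠ s + ((-k : ℤ) : ZMod p) := by
      intro h2; apply h; push_cast at h2 ⊢; rw [h2]; ring
    rw [if_neg h, if_neg h2, star_zero]

end Stmt10Aux

namespace Stmt10Aux

variable {p : ℕ} [NeZero p]

lemma Gm_conjT (c ω : ℂ) (hcc : (starRingEnd ℂ) c = c⁻¹)
    (hωc : (starRingEnd ℂ) ω = ω⁻¹) (l : ℤ) :
    (Gm p c ω l)ᴴ = Gm p c ω (-l) := by
  ext r s
  rcases eq_or_ne r s with rfl | h
  · rw [conjTranspose_apply, Gm, Gm, diagonal_apply_eq, diagonal_apply_eq]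
    have hc' : star c = c⁻¹ := hcc
    have hω' : star ω = ω⁻¹ := hωc
    rw [star_mul', star_zpow₀, star_zpow₀, hc', hω', _root_.inv_zpow, _root_.inv_zpow,
      ← _root_.zpow_neg, ← _root_.zpow_neg, neg_mul]
  · rw [conjTranspose_apply, Gm, Gm, diagonal_apply_ne _ (Ne.symm h), diagonal_apply_ne _ h,
      star_zero]

lemma Fm_shift (c : ℂ) (hc0 : c ≠ 0) (k d : ℤ) :
    Fm p c (k + p * d) = (c ^ ((p : ℤ) * d)) • Fm p c k := by
  ext r s
  have hcast : ((k + p * d : ℤ) : ZMod p) = (k : ZMod p) := by push_cast; simp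
  simp only [Fm, Matrix.smul_apply, smul_eq_mul, hcast]
  by_cases h : r = s + (k : ZMod p)
  · rw [if_pos h, if_pos h, ← zpow_add₀ hc0]
    ring_nf
  · rw [if_neg h, if_neg h, mul_zero]

lemma Gm_shift (c ω : ℂ) (hc0 : c ≠ 0) (hω0 : ω ≠ 0) (hωp : ω ^ p = 1) (l e : ℤ) :
    Gm p c ω (l + p * e) = (c ^ ((p : ℤ) * e)) • Gm p c ω l := by
  ext r s
  rcases eq_or_ne r s with rfl | h
  · rw [Gm, Gm, Matrix.smul_apply, diagonal_apply_eq, diagonal_apply_eq, smul_eq_mul]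
    have hω1 : ω ^ (((p : ℤ) * e) * (r.val : ℤ)) = 1 := by
      have harr : ((p : ℤ) * e) * (r.val : ℤ) = (p : ℤ) * (e * (r.val : ℤ)) := by ring
      rw [harr, _root_.zpow_mul, zpow_natCast, hωp, _root_.one_zpow]
    calc c ^ (l + p * e) * ω ^ ((l + p * e) * (r.val : ℤ))
        = (c ^ l * c ^ ((p:ℤ) * e)) * (ω ^ (l * (r.val:ℤ)) * ω ^ (((p:ℤ) * e) * (r.val:ℤ))) := by
          rw [← zpow_add₀ hc0, ← zpow_add₀ hω0, ← add_mul]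
      _ = c ^ ((p:ℤ) * e) * (c ^ l * ω ^ (l * (r.val:ℤ))) := by rw [hω1, mul_one]; ring
  · rw [Gm, Gm, Matrix.smul_apply, diagonal_apply_ne _ h, diagonal_apply_ne _ h, smul_eq_mul, mul_zero]

end Stmt10Aux

namespace Stmt10Aux

variable {p : ℕ} [NeZero p]

lemma inner_char (ω : ℂ) (hω : IsPrimitiveRoot ω p) (s u : ZMod p) :
    ∑ μ : ZMod p, ω ^ ((μ.val : ℤ) * (s.val : ℤ) - (μ.val : ℤ) * (u.val : ℤ))
      = if u = s then (p : ℂ) else 0 := by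
  have key : ∀ μ : ZMod p, ω ^ ((μ.val : ℤ) * (s.val : ℤ) - (μ.val : ℤ) * (u.val : ℤ))
      = (ω ^ ((s.val : ℤ) - (u.val : ℤ))) ^ μ.val := by
    intro μ
    rw [← _root_.zpow_natCast (ω ^ ((s.val : ℤ) - (u.val : ℤ))) μ.val, ← _root_.zpow_mul]
    congr 1
    ring
  have hζp : (ω ^ ((s.val : ℤ) - (u.val : ℤ))) ^ p = 1 := by
    rw [← _root_.zpow_natCast (ω ^ ((s.val : ℤ) - (u.val : ℤ))) p, ← _root_.zpow_mul, mul_comm,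
      _root_.zpow_mul, zpow_natCast, hω.pow_eq_one, _root_.one_zpow]
  have hiff : (ω ^ ((s.val : ℤ) - (u.val : ℤ)) = 1) ↔ u = s := by
    rw [hω.zpow_eq_one_iff_dvd]
    constructor
    · intro hdvd
      have habs : |(s.val : ℤ) - (u.val : ℤ)| < (p : ℤ) := by
        have h1 : (s.val : ℤ) < p := Int.ofNat_lt.mpr (ZMod.val_lt s)
        have h2 : (u.val : ℤ) < p := Int.ofNat_lt.mpr (ZMod.val_lt u)
        rw [abs_sub_lt_iff]
        omega
      have := Int.eq_zero_of_abs_lt_dvd hdvd habs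
      have hval : s.val = u.val := by omega
      exact (ZMod.val_injective p hval).symm
    · rintro rfl; simp
  rw [Finset.sum_congr rfl (fun μ _ => key μ), char_sum _ hζp, if_congr hiff rfl rfl]

end Stmt10Aux

namespace Stmt10Aux

variable {p : ℕ} [NeZero p]

lemma trace_mul_conjT (c ω : ℂ) (hcc : (starRingEnd ℂ) c = c⁻¹) (hωc : (starRingEnd ℂ) ω = ω⁻¹)
    (k l : ℤ) (X : Matrix (ZMod p) (ZMod p) ℂ) :
    (X * (Fm p c k * Gm p c ω l)ᴴ).trace
      = ∑ u : ZMod p, X (u + (k : ZMod p)) u * ((c ^ (-k) * c ^ (-l)) * ω ^ (-(l * (u.val : ℤ)))) := by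
  rw [Matrix.trace]
  set N := Fm p c k * Gm p c ω l with hNdef
  have hN : ∀ r s, N r s = if r = s + (k : ZMod p) then (c ^ k * c ^ l) * ω ^ (l * (s.val : ℤ)) else 0 := by
    intro r s; rw [hNdef, FG_apply]
  simp only [Matrix.diag, mul_apply, conjTranspose_apply]
  rw [Finset.sum_comm]
  apply Finset.sum_congr rfl
  intro u _
  rw [Finset.sum_eq_single (u + (k : ZMod p))]
  · rw [hN, if_pos rfl]
    congr 1
    have hc' : star c = c⁻¹ := hcc
    have hω' : star ω = ω⁻¹ := hωc
    rw [star_mul', star_mul', star_zpow₀, star_zpow₀, star_zpow₀, hc', hω',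
      _root_.inv_zpow, ← _root_.zpow_neg, _root_.inv_zpow, ← _root_.zpow_neg,
      _root_.inv_zpow, ← _root_.zpow_neg]
  · intro t _ ht
    rw [hN, if_neg ht, star_zero, mul_zero]
  · intro h; exact absurd (Finset.mem_univ _) h

lemma expansion (c ω : ℂ) (hc0 : c ≠ 0) (hω0 : ω ≠ 0) (hp0 : (p : ℂ) ≠ 0)
    (hcc : (starRingEnd ℂ) c = c⁻¹) (hωc : (starRingEnd ℂ) ω = ω⁻¹)
    (hω : IsPrimitiveRoot ω p) (X : Matrix (ZMod p) (ZMod p) ℂ) :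
    X = ∑ κ : ZMod p, ∑ μ : ZMod p,
      ((p : ℂ)⁻¹ * (X * (Fm p c (κ.val : ℤ) * Gm p c ω (μ.val : ℤ))ᴴ).trace) •
        (Fm p c (κ.val : ℤ) * Gm p c ω (μ.val : ℤ)) := by
  have hval : ∀ κ : ZMod p, (((κ.val : ℤ)) : ZMod p) = κ := by
    intro κ; push_cast; exact ZMod.natCast_rightInverse κ
  ext r s
  symm
  have hrs : s + (r - s) = r := by rw [add_comm]; exact sub_add_cancel r s
  calc (∑ κ : ZMod p, ∑ μ : ZMod p,
      ((p : ℂ)⁻¹ * (X * (Fm p c (κ.val : ℤ) * Gm p c ω (μ.val : ℤ))ᴴ).trace) •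
        (Fm p c (κ.val : ℤ) * Gm p c ω (μ.val : ℤ))) r s
      = ∑ κ : ZMod p, ∑ μ : ZMod p,
          ((p : ℂ)⁻¹ * (X * (Fm p c (κ.val : ℤ) * Gm p c ω (μ.val : ℤ))ᴴ).trace) *
            (if r = s + κ then (c ^ (κ.val : ℤ) * c ^ (μ.val : ℤ)) * ω ^ ((μ.val : ℤ) * (s.val : ℤ)) else 0) := by
        simp only [Matrix.sum_apply, Matrix.smul_apply, smul_eq_mul, FG_apply, hval]
    _ = ∑ μ : ZMod p,
          ((p : ℂ)⁻¹ * (X * (Fm p c (((r-s).val : ℤ)) * Gm p c ω (μ.val : ℤ))ᴴ).trace) *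
            ((c ^ (((r-s).val : ℤ)) * c ^ (μ.val : ℤ)) * ω ^ ((μ.val : ℤ) * (s.val : ℤ))) := by
        rw [Finset.sum_eq_single (r - s)]
        · apply Finset.sum_congr rfl
          intro μ _
          rw [if_pos hrs.symm]
        · intro κ _ hκ
          apply Finset.sum_eq_zero
          intro μ _
          rw [if_neg, mul_zero]
          intro h
          exact hκ (by rw [h, add_sub_cancel_left])
        · intro h; exact absurd (Finset.mem_univ _) h
    _ = ∑ μ : ZMod p, ∑ u : ZMod p,
          ((p : ℂ)⁻¹ * X (u + (r - s)) u) *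
            ω ^ ((μ.val : ℤ) * (s.val : ℤ) - (μ.val : ℤ) * (u.val : ℤ)) := by
        apply Finset.sum_congr rfl
        intro μ _
        rw [trace_mul_conjT c ω hcc hωc]
        simp only [hval]
        rw [Finset.mul_sum, Finset.sum_mul]
        apply Finset.sum_congr rfl
        intro u _
        have hccc : (c ^ (-((r-s).val : ℤ)) * c ^ (-(μ.val : ℤ))) *
            (c ^ (((r-s).val : ℤ)) * c ^ ((μ.val : ℤ))) = 1 := by
          rw [← zpow_add₀ hc0, ← zpow_add₀ hc0, ← zpow_add₀ hc0, ← neg_add, neg_add_cancel,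
            zpow_zero]
        have hωω : ω ^ (-((μ.val : ℤ) * (u.val : ℤ))) * ω ^ ((μ.val : ℤ) * (s.val : ℤ))
            = ω ^ ((μ.val : ℤ) * (s.val : ℤ) - (μ.val : ℤ) * (u.val : ℤ)) := by
          rw [← zpow_add₀ hω0]
          congr 1
          ring
        calc (p : ℂ)⁻¹ * (X (u + (r - s)) u *
                ((c ^ (-((r-s).val : ℤ)) * c ^ (-(μ.val : ℤ))) * ω ^ (-((μ.val : ℤ) * (u.val : ℤ))))) *
              ((c ^ (((r-s).val : ℤ)) * c ^ ((μ.val : ℤ))) * ω ^ ((μ.val : ℤ) * (s.val : ℤ)))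
            = ((c ^ (-((r-s).val : ℤ)) * c ^ (-(μ.val : ℤ))) * (c ^ (((r-s).val : ℤ)) * c ^ ((μ.val : ℤ)))) *
              ((ω ^ (-((μ.val : ℤ) * (u.val : ℤ)))) * ω ^ ((μ.val : ℤ) * (s.val : ℤ))) *
              ((p : ℂ)⁻¹ * X (u + (r - s)) u) := by ring
          _ = ((p : ℂ)⁻¹ * X (u + (r - s)) u) *
              ω ^ ((μ.val : ℤ) * (s.val : ℤ) - (μ.val : ℤ) * (u.val : ℤ)) := by
              rw [hccc, hωω, one_mul, mul_comm]
    _ = ∑ u : ZMod p, ((p : ℂ)⁻¹ * X (u + (r - s)) u) * (if u = s then (p : ℂ) else 0) := by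
        rw [Finset.sum_comm]
        apply Finset.sum_congr rfl
        intro u _
        rw [← Finset.mul_sum, inner_char ω hω]
    _ = X r s := by
        rw [Finset.sum_eq_single s]
        · rw [if_pos rfl, hrs, mul_comm ((p:ℂ)⁻¹) (X r s), mul_assoc, inv_mul_cancel₀ hp0, mul_one]
        · intro u _ hu
          rw [if_neg hu, mul_zero]
        · intro h; exact absurd (Finset.mem_univ _) h

end Stmt10Aux

namespace Stmt10Aux

variable {p : ℕ} [NeZero p]

lemma BA_comm (c ω : ℂ) (hp2 : 2 ≤ p) (hωp : ω ^ p = 1) :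
    Gm p c ω 1 * Fm p c 1 = ω • (Fm p c 1 * Gm p c ω 1) := by
  ext r s
  rw [Matrix.smul_apply, FG_apply, Gm, diagonal_mul]
  simp only [Fm, zpow_one, one_mul, mul_ite, mul_zero, smul_eq_mul]
  by_cases h : r = s + ((1 : ℤ) : ZMod p)
  · rw [if_pos h, if_pos h]
    have h1 : r = s + 1 := by rwa [Int.cast_one] at h
    haveI : Fact (1 < p) := ⟨by omega⟩
    have hv : (s + 1 : ZMod p).val = (s.val + 1) % p := by
      rw [ZMod.val_add, ZMod.val_one]
    rw [h1, zpow_natCast, zpow_natCast, hv, pow_val_mod ω hωp, pow_succ]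
    ring
  · rw [if_neg h, if_neg h]

lemma val_neg_shift (κ : ZMod p) : ∃ d : ℤ, (((-κ).val : ℤ)) = -(κ.val : ℤ) + p * d := by
  have h1 : ((((-κ).val : ℕ)) : ZMod p) = -κ := ZMod.natCast_rightInverse _
  have h2 : (((κ.val : ℕ)) : ZMod p) = κ := ZMod.natCast_rightInverse _
  have h0 : ((((-κ).val : ℤ) - (-(κ.val : ℤ)) : ℤ) : ZMod p) = 0 := by
    push_cast
    rw [h1, h2]
    ring
  obtain ⟨d, hd⟩ := (ZMod.intCast_zmod_eq_zero_iff_dvd _ p).mp h0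
  exact ⟨d, by linarith⟩

end Stmt10Aux

set_option maxHeartbeats 1000000 in
open Stmt10Aux in
theorem stmt_10 (p : ℕ) (hp : 2 ≤ p) [NeZero p] (hp4 : p % 4 ≠ 0)
    (ω c : ℂ)
    (hω : ω = Complex.exp (2 * Real.pi * Complex.I / p))
    (hc : c = Complex.I ^ ((1 : ℤ) - (p : ℤ) ^ 2))
    (A' B' : (Matrix (ZMod p) (ZMod p) ℂ)ˣ)
    (hA' : (A' : Matrix (ZMod p) (ZMod p) ℂ) = fun r s => if r = s + 1 then c else 0)
    (hB' : (B' : Matrix (ZMod p) (ZMod p) ℂ) = fun r s => if r = s then c * ω ^ s.val else 0)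
    (m : ℤ → ℤ → Set (Matrix (ZMod p) (ZMod p) ℂ))
    (hm : ∀ k l : ℤ, m k l = {X | Xᴴ = -X ∧ X.trace = 0 ∧
      ∃ a b : ℂ, X = a • ((A' ^ k * B' ^ l :
            (Matrix (ZMod p) (ZMod p) ℂ)ˣ) : Matrix (ZMod p) (ZMod p) ℂ)
        + b • ((A' ^ (-k) * B' ^ (-l) :
            (Matrix (ZMod p) (ZMod p) ℂ)ˣ) : Matrix (ZMod p) (ZMod p) ℂ)}) :
    (∀ k l : ℤ, ¬((k : ZMod p) = 0 ∧ (l : ZMod p) = 0) →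
      ∀ X ∈ m k l, ∀ Y ∈ m k l, X * Y - Y * X = 0) ∧
    (∀ X : Matrix (ZMod p) (ZMod p) ℂ, Xᴴ = -X → X.trace = 0 →
      X ∈ Submodule.span ℝ
        (⋃ (k : ℤ) (l : ℤ) (_ : ¬((k : ZMod p) = 0 ∧ (l : ZMod p) = 0)), m k l)) := by
  -- basic scalar facts
  have hpne : p ≠ 0 := NeZero.ne p
  have hp0 : (p : ℂ) ≠ 0 := Nat.cast_ne_zero.mpr hpne
  have hωprim : IsPrimitiveRoot ω p := by rw [hω]; exact Complex.isPrimitiveRoot_exp p hpne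
  have hω0 : ω ≠ 0 := by rw [hω]; exact Complex.exp_ne_zero _
  have hωp : ω ^ p = 1 := hωprim.pow_eq_one
  have hωc : (starRingEnd ℂ) ω = ω⁻¹ := by
    rw [hω, ← Complex.exp_conj, ← Complex.exp_neg]
    congr 1
    simp only [map_div₀, _root_.map_mul, Complex.conj_I, Complex.conj_ofReal, map_ofNat,
      Complex.conj_natCast]
    ring
  have hc0 : c ≠ 0 := by rw [hc]; exact zpow_ne_zero _ Complex.I_ne_zero
  have hcc : (starRingEnd ℂ) c = c⁻¹ := by
    rw [hc, map_zpow₀, Complex.conj_I, ← Complex.inv_I, _root_.inv_zpow, ← _root_.inv_zpow,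
      _root_.inv_zpow]
  have hconjc : ∀ n : ℤ, (starRingEnd ℂ) (c ^ n) = c ^ (-n) := by
    intro n
    rw [map_zpow₀, hcc, _root_.inv_zpow, ← _root_.zpow_neg]
  -- units facts
  have hA1 : (A' : Matrix (ZMod p) (ZMod p) ℂ) = Fm p c 1 := by rw [hA', Fm_one]
  have hB1 : (B' : Matrix (ZMod p) (ZMod p) ℂ) = Gm p c ω 1 := by rw [hB', Gm_one]
  have hFA : ∀ k : ℤ, ((A' ^ k : (Matrix (ZMod p) (ZMod p) ℂ)ˣ) : Matrix (ZMod p) (ZMod p) ℂ) = Fm p c k :=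
    units_zpow_eq A' _ (Fm_mul c hc0) (Fm_zero c) hA1
  have hGB : ∀ l : ℤ, ((B' ^ l : (Matrix (ZMod p) (ZMod p) ℂ)ˣ) : Matrix (ZMod p) (ZMod p) ℂ) = Gm p c ω l :=
    units_zpow_eq B' _ (Gm_mul c ω hc0 hω0) (Gm_zero c ω) hB1
  have hN : ∀ k l : ℤ, ((A' ^ k * B' ^ l : (Matrix (ZMod p) (ZMod p) ℂ)ˣ) : Matrix (ZMod p) (ZMod p) ℂ) = Fm p c k * Gm p c ω l := by
    intro k l; rw [Units.val_mul, hFA, hGB]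
  set w : (Matrix (ZMod p) (ZMod p) ℂ)ˣ := (Units.map (algebraMap ℂ (Matrix (ZMod p) (ZMod p) ℂ)).toMonoidHom) (Units.mk0 ω hω0) with hwdef
  have hwval : ∀ n : ℤ, ((w ^ n : (Matrix (ZMod p) (ZMod p) ℂ)ˣ) : Matrix (ZMod p) (ZMod p) ℂ) = ω ^ n • (1 : Matrix (ZMod p) (ZMod p) ℂ) := by
    intro n
    rw [hwdef, ← map_zpow, Units.coe_map]
    show (algebraMap ℂ (Matrix (ZMod p) (ZMod p) ℂ)) (((Units.mk0 ω hω0 ^ n : ℂˣ) : ℂ)) = _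
    rw [Units.val_zpow_eq_zpow_val, Units.val_mk0, Algebra.algebraMap_eq_smul_one]
  have hsmul1 : ∀ (z : ℂ) (Y : Matrix (ZMod p) (ZMod p) ℂ), (z • (1 : Matrix (ZMod p) (ZMod p) ℂ)) * Y = z • Y := by
    intro z Y; rw [smul_mul_assoc, one_mul]
  have hwcentral : ∀ g : (Matrix (ZMod p) (ZMod p) ℂ)ˣ, w * g = g * w := by
    intro g
    apply Units.ext
    rw [Units.val_mul, Units.val_mul]
    exact (Algebra.commutes ω ((g : Matrix (ZMod p) (ZMod p) ℂ)))
  have hcommBA : B' * A' = w * (A' * B') := by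
    apply Units.ext
    rw [Units.val_mul, Units.val_mul, Units.val_mul, hA1, hB1]
    show Gm p c ω 1 * Fm p c 1 = (algebraMap ℂ (Matrix (ZMod p) (ZMod p) ℂ) ω) * (Fm p c 1 * Gm p c ω 1)
    rw [Algebra.algebraMap_eq_smul_one, hsmul1]
    exact BA_comm c ω hp hωp
  have hkey : ∀ k l : ℤ, B' ^ l * A' ^ k = w ^ (k * l) * (A' ^ k * B' ^ l) :=
    fun k l => comm_zpow w A' B' hwcentral hcommBA k l
  have hwzcomm : ∀ (n : ℤ) (g : (Matrix (ZMod p) (ZMod p) ℂ)ˣ), g * w ^ n = w ^ n * g := by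
    intro n g
    exact ((Commute.zpow_left (hwcentral g) n)).symm
  -- the two generators commute
  have hMM : ∀ k l : ℤ, (A' ^ k * B' ^ l) * (A' ^ (-k) * B' ^ (-l))
      = (A' ^ (-k) * B' ^ (-l)) * (A' ^ k * B' ^ l) := by
    intro k l
    have e1 : (A' ^ k * B' ^ l) * (A' ^ (-k) * B' ^ (-l))
        = w ^ ((-k) * l) * (A' ^ k * A' ^ (-k) * (B' ^ l * B' ^ (-l))) := by
      calc (A' ^ k * B' ^ l) * (A' ^ (-k) * B' ^ (-l))
          = A' ^ k * (B' ^ l * A' ^ (-k)) * B' ^ (-l) := by group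
        _ = A' ^ k * (w ^ ((-k) * l) * (A' ^ (-k) * B' ^ l)) * B' ^ (-l) := by rw [hkey]
        _ = (A' ^ k * w ^ ((-k) * l)) * (A' ^ (-k) * B' ^ l) * B' ^ (-l) := by group
        _ = (w ^ ((-k) * l) * A' ^ k) * (A' ^ (-k) * B' ^ l) * B' ^ (-l) := by
            rw [hwzcomm]
        _ = w ^ ((-k) * l) * (A' ^ k * A' ^ (-k) * (B' ^ l * B' ^ (-l))) := by group
    have e2 : (A' ^ (-k) * B' ^ (-l)) * (A' ^ k * B' ^ l)
        = w ^ (k * (-l)) * (A' ^ (-k) * A' ^ k * (B' ^ (-l) * B' ^ l)) := by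
      calc (A' ^ (-k) * B' ^ (-l)) * (A' ^ k * B' ^ l)
          = A' ^ (-k) * (B' ^ (-l) * A' ^ k) * B' ^ l := by group
        _ = A' ^ (-k) * (w ^ (k * (-l)) * (A' ^ k * B' ^ (-l))) * B' ^ l := by rw [hkey]
        _ = (A' ^ (-k) * w ^ (k * (-l))) * (A' ^ k * B' ^ (-l)) * B' ^ l := by group
        _ = (w ^ (k * (-l)) * A' ^ (-k)) * (A' ^ k * B' ^ (-l)) * B' ^ l := by rw [hwzcomm]
        _ = w ^ (k * (-l)) * (A' ^ (-k) * A' ^ k * (B' ^ (-l) * B' ^ l)) := by group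
    rw [e1, e2]
    have he : (-k) * l = k * (-l) := by ring
    rw [he]
    group
  constructor
  · -- Part 1: each m k l is abelian
    intro k l _ X hX Y hY
    rw [hm k l] at hX hY
    obtain ⟨-, -, a, b, rfl⟩ := hX
    obtain ⟨-, -, a', b', rfl⟩ := hY
    have hcomm : ((A' ^ k * B' ^ l : (Matrix (ZMod p) (ZMod p) ℂ)ˣ) : Matrix (ZMod p) (ZMod p) ℂ) * ((A' ^ (-k) * B' ^ (-l) : (Matrix (ZMod p) (ZMod p) ℂ)ˣ) : Matrix (ZMod p) (ZMod p) ℂ)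
        = ((A' ^ (-k) * B' ^ (-l) : (Matrix (ZMod p) (ZMod p) ℂ)ˣ) : Matrix (ZMod p) (ZMod p) ℂ) * ((A' ^ k * B' ^ l : (Matrix (ZMod p) (ZMod p) ℂ)ˣ) : Matrix (ZMod p) (ZMod p) ℂ) := by
      rw [← Units.val_mul, ← Units.val_mul, hMM]
    simp only [add_mul, mul_add, smul_mul_assoc, mul_smul_comm, smul_smul]
    rw [hcomm]
    module
  · -- Part 2
    intro X hXskew hXtr
    have hval : ∀ κ : ZMod p, (((κ.val : ℤ)) : ZMod p) = κ := by
      intro κ; push_cast; exact ZMod.natCast_rightInverse κ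
    have hNH : ∀ k l : ℤ, (Fm p c k * Gm p c ω l)ᴴ
        = ω ^ (k * l) • (Fm p c (-k) * Gm p c ω (-l)) := by
      intro k l
      rw [conjTranspose_mul, Fm_conjT c hcc, Gm_conjT c ω hcc hωc]
      have h1 := congrArg Units.val (hkey (-k) (-l))
      rw [Units.val_mul, Units.val_mul, hGB, hFA, hwval, hN, hsmul1, neg_mul_neg] at h1
      exact h1
    -- Claim A: the paired element lies in m k l
    have hclaimA : ∀ k l : ℤ, ¬((k : ZMod p) = 0 ∧ (l : ZMod p) = 0) →
        ((p:ℂ)⁻¹ * (X * (Fm p c k * Gm p c ω l)ᴴ).trace) • (Fm p c k * Gm p c ω l)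
        + ((p:ℂ)⁻¹ * (X * (Fm p c (-k) * Gm p c ω (-l))ᴴ).trace) •
            (Fm p c (-k) * Gm p c ω (-l))
        ∈ m k l := by
      intro k l hkl
      have hkl' : ¬(((-k : ℤ) : ZMod p) = 0 ∧ ((-l : ℤ) : ZMod p) = 0) := by
        push_cast
        rw [neg_eq_zero, neg_eq_zero]
        exact hkl
      set α := (p:ℂ)⁻¹ * (X * (Fm p c k * Gm p c ω l)ᴴ).trace with hα
      set β := (p:ℂ)⁻¹ * (X * (Fm p c (-k) * Gm p c ω (-l))ᴴ).trace with hβ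
      set Nk := Fm p c k * Gm p c ω l with hNk
      set Nk' := Fm p c (-k) * Gm p c ω (-l) with hNk'
      have hNH1 : Nkᴴ = ω ^ (k*l) • Nk' := hNH k l
      have hNH2 : Nk'ᴴ = ω ^ (k*l) • Nk := by
        have h2 := hNH (-k) (-l)
        rw [neg_neg, neg_neg, neg_mul_neg] at h2
        exact h2
      have hiω : ω ^ (-(k*l)) * ω ^ (k*l) = 1 := by
        rw [← zpow_add₀ hω0, neg_add_cancel, zpow_zero]
      have key : ∀ N1 N2 : Matrix (ZMod p) (ZMod p) ℂ, N2ᴴ = ω ^ (k*l) • N1 →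
          (starRingEnd ℂ) ((p:ℂ)⁻¹ * (X * N1ᴴ).trace) * ω ^ (k*l)
            = -((p:ℂ)⁻¹ * (X * N2ᴴ).trace) := by
        intro N1 N2 h12
        have hNrw : N1 = ω ^ (-(k*l)) • N2ᴴ := by
          rw [h12, smul_smul, hiω, one_smul]
        have h1 : (starRingEnd ℂ) ((X * N1ᴴ).trace) = ((X * N1ᴴ)ᴴ).trace := by
          rw [Matrix.trace_conjTranspose, RCLike.star_def]
        have h2 : (X * N1ᴴ)ᴴ = -(N1 * X) := by
          rw [conjTranspose_mul, conjTranspose_conjTranspose, hXskew, Matrix.mul_neg]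
        have h4 : (X * N1).trace = ω ^ (-(k*l)) * (X * N2ᴴ).trace := by
          conv_lhs => rw [hNrw]
          rw [Matrix.mul_smul, Matrix.trace_smul, smul_eq_mul]
        calc (starRingEnd ℂ) ((p:ℂ)⁻¹ * (X * N1ᴴ).trace) * ω ^ (k*l)
            = ((p:ℂ)⁻¹ * (starRingEnd ℂ) ((X * N1ᴴ).trace)) * ω ^ (k*l) := by
              rw [_root_.map_mul, map_inv₀, Complex.conj_natCast]
          _ = ((p:ℂ)⁻¹ * (-((X * N1).trace))) * ω ^ (k*l) := by
              rw [h1, h2, Matrix.trace_neg, Matrix.trace_mul_comm]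
          _ = ((p:ℂ)⁻¹ * (-(ω ^ (-(k*l)) * (X * N2ᴴ).trace))) * ω ^ (k*l) := by rw [h4]
          _ = -((p:ℂ)⁻¹ * (X * N2ᴴ).trace) * (ω ^ (-(k*l)) * ω ^ (k*l)) := by ring
          _ = -((p:ℂ)⁻¹ * (X * N2ᴴ).trace) := by rw [hiω, mul_one]
      have hconjα : (starRingEnd ℂ) α * ω ^ (k*l) = -β := by
        rw [hα, hβ]; exact key Nk Nk' hNH2
      have hconjβ : (starRingEnd ℂ) β * ω ^ (k*l) = -α := by
        rw [hα, hβ]; exact key Nk' Nk hNH1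
      rw [hm k l]
      refine ⟨?_, ?_, α, β, ?_⟩
      · -- skew-hermitian
        rw [conjTranspose_add, Matrix.conjTranspose_smul, Matrix.conjTranspose_smul,
          hNH1, hNH2]
        rw [smul_smul, smul_smul]
        show ((starRingEnd ℂ) α * ω ^ (k*l)) • Nk' + ((starRingEnd ℂ) β * ω ^ (k*l)) • Nk
          = -(α • Nk + β • Nk')
        rw [hconjα, hconjβ, neg_smul, neg_smul, neg_add]
        abel
      · -- trace zero
        rw [Matrix.trace_add, Matrix.trace_smul, Matrix.trace_smul, hNk, hNk',
          trace_FG c ω hωprim k l hkl, trace_FG c ω hωprim (-k) (-l) hkl', smul_zero,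
          smul_zero, add_zero]
      · rw [hN, hN]
    -- expansion of X
    have hexp := expansion c ω hc0 hω0 hp0 hcc hωc hωprim X
    set T : ZMod p × ZMod p → Matrix (ZMod p) (ZMod p) ℂ := fun z =>
      ((p:ℂ)⁻¹ * (X * (Fm p c (z.1.val : ℤ) * Gm p c ω (z.2.val : ℤ))ᴴ).trace) •
        (Fm p c (z.1.val : ℤ) * Gm p c ω (z.2.val : ℤ)) with hT
    have hXsum : X = ∑ z : ZMod p × ZMod p, T z := by
      rw [Fintype.sum_prod_type]
      exact hexp
    have hT00 : T 0 = 0 := by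
      simp only [hT, Prod.fst_zero, Prod.snd_zero, ZMod.val_zero, Nat.cast_zero, Fm_zero,
        Gm_zero, mul_one, conjTranspose_one, hXtr, mul_zero, zero_smul]
    set sfin : Finset (ZMod p × ZMod p) := Finset.univ.erase 0 with hsfin
    have hXsum2 : X = ∑ z ∈ sfin, T z := by
      calc X = ∑ z : ZMod p × ZMod p, T z := hXsum
        _ = T 0 + ∑ z ∈ sfin, T z := (Finset.add_sum_erase _ T (Finset.mem_univ 0)).symm
        _ = ∑ z ∈ sfin, T z := by rw [hT00, zero_add]
    have hsum_neg : ∑ z ∈ sfin, T (-z) = ∑ z ∈ sfin, T z := by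
      refine Finset.sum_equiv (Equiv.neg (ZMod p × ZMod p)) ?_ ?_
      · intro z
        rw [hsfin]
        simp [Finset.mem_erase, neg_eq_zero, Equiv.neg_apply]
      · intro z _
        rfl
    have hXsum3 : X = ∑ z ∈ sfin, (2⁻¹ : ℝ) • (T z + T (-z)) := by
      have e1 : ∑ z ∈ sfin, (2⁻¹ : ℝ) • (T z + T (-z))
          = (2⁻¹ : ℝ) • ((∑ z ∈ sfin, T z) + ∑ z ∈ sfin, T (-z)) := by
        rw [← Finset.sum_add_distrib, Finset.smul_sum]
      rw [e1, hsum_neg, ← hXsum2, ← two_smul ℝ X, smul_smul]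
      norm_num
    rw [hXsum3]
    apply Submodule.sum_mem
    intro z hz
    apply Submodule.smul_mem
    apply Submodule.subset_span
    have hz0 : z ≠ 0 := (Finset.mem_erase.mp hz).1
    have hcond : ¬(((z.1.val : ℤ) : ZMod p) = 0 ∧ ((z.2.val : ℤ) : ZMod p) = 0) := by
      rw [hval, hval]
      intro hboth
      exact hz0 (Prod.ext hboth.1 hboth.2)
    refine Set.mem_iUnion.mpr ⟨(z.1.val : ℤ), Set.mem_iUnion.mpr ⟨(z.2.val : ℤ),
      Set.mem_iUnion.mpr ⟨hcond, ?_⟩⟩⟩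
    obtain ⟨d1, hd1⟩ := val_neg_shift z.1
    obtain ⟨d2, hd2⟩ := val_neg_shift z.2
    have hTneg : T (-z)
        = ((p:ℂ)⁻¹ * (X * (Fm p c (-(z.1.val:ℤ)) * Gm p c ω (-(z.2.val:ℤ)))ᴴ).trace) •
          (Fm p c (-(z.1.val:ℤ)) * Gm p c ω (-(z.2.val:ℤ))) := by
      have e1 : (((-z).1.val : ℤ)) = -(z.1.val:ℤ) + p * d1 := hd1
      have e2 : (((-z).2.val : ℤ)) = -(z.2.val:ℤ) + p * d2 := hd2
      set γ : ℂ := c ^ ((p:ℤ)*d1) * c ^ ((p:ℤ)*d2) with hγ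
      have hstarc : ∀ n : ℤ, (star (c ^ n) : ℂ) = c ^ (-n) := fun n => hconjc n
      have hγγ : star γ * γ = 1 := by
        have hsγ : (star γ : ℂ) = c ^ (-((p:ℤ)*d1)) * c ^ (-((p:ℤ)*d2)) := by
          rw [hγ, star_mul', hstarc, hstarc]
        calc star γ * γ
            = (c ^ (-((p:ℤ)*d1)) * c ^ ((p:ℤ)*d1)) * (c ^ (-((p:ℤ)*d2)) * c ^ ((p:ℤ)*d2)) := by
              rw [hsγ, hγ]; ring
          _ = 1 := by
              rw [← zpow_add₀ hc0, ← zpow_add₀ hc0, neg_add_cancel, neg_add_cancel]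
              norm_num
      have hmat : Fm p c (((-z).1.val : ℤ)) * Gm p c ω (((-z).2.val : ℤ))
          = γ • (Fm p c (-(z.1.val:ℤ)) * Gm p c ω (-(z.2.val:ℤ))) := by
        rw [e1, e2, Fm_shift c hc0, Gm_shift c ω hc0 hω0 hωp, smul_mul_assoc, mul_smul_comm,
          smul_smul, hγ]
      simp only [hT]
      rw [hmat, conjTranspose_smul, Matrix.mul_smul, Matrix.trace_smul, smul_eq_mul, smul_smul]
      congr 1
      calc ((p:ℂ)⁻¹ * (star γ *
              (X * (Fm p c (-(z.1.val:ℤ)) * Gm p c ω (-(z.2.val:ℤ)))ᴴ).trace)) * γ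
          = (star γ * γ) *
              ((p:ℂ)⁻¹ * (X * (Fm p c (-(z.1.val:ℤ)) * Gm p c ω (-(z.2.val:ℤ)))ᴴ).trace) := by
            ring
        _ = (p:ℂ)⁻¹ * (X * (Fm p c (-(z.1.val:ℤ)) * Gm p c ω (-(z.2.val:ℤ)))ᴴ).trace := by
            rw [hγγ, one_mul]
    have hTz : T z = ((p:ℂ)⁻¹ * (X * (Fm p c ((z.1.val:ℤ)) * Gm p c ω ((z.2.val:ℤ)))ᴴ).trace) •
        (Fm p c ((z.1.val:ℤ)) * Gm p c ω ((z.2.val:ℤ))) := by simp only [hT]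
    rw [hTneg, hTz]
    exact hclaimA (z.1.val:ℤ) (z.2.val:ℤ) hcond
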